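/- Let n ≥ 3, m, c ≥ 1, and T ≥ 1 be integers satisfying (2c+1)·T ≤ m/2 and (c+1)(n−2) < m/2. For each t ∈ {1,…,T}, let u^t = (u^t_1,…,u^t_n) be the profile of binary additive utility functions over M = {1,…,m} given by: u^t_1(j) = u^t_2(j) = 1 if ⌊(j−1)/(2c+1)⌋ = t−1 and 0 otherwise; and for each agent i ∈ {3,…,n}, u^t_i(j) = 1 if j ≥ m − (c+1)(n−2) and 0 otherwise. Then for any distinct t, t' ∈ {1,…,T}, no connected allocation is simultaneously EFc with respect to u^t and EFc with respect to u^{t'}. -/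
import Mathlib


def IsPartition {n m : ℕ} (A : Fin n → Finset (Fin m)) : Prop :=
  (∀ i j : Fin n, i ≠ j → Disjoint (A i) (A j)) ∧
    Finset.univ.biUnion A = (Finset.univ : Finset (Fin m))

def EF {n m : ℕ} (c : ℕ) (u : Fin n → Finset (Fin m) → ℝ)
    (A : Fin n → Finset (Fin m)) : Prop :=
  ∀ i i' : Fin n, ∃ S ⊆ A i', S.card ≤ c ∧ u i (A i) ≥ u i (A i' \ S)

def ConnAlloc {n m : ℕ} (A : Fin n → Finset (Fin m)) : Prop :=
  ∀ i : Fin n, ∀ a b c : Fin m, a ∈ A i → c ∈ A i → a ≤ b → b ≤ c → b ∈ A i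

def binUtil {m : ℕ} (v : Fin m → Bool) (S : Finset (Fin m)) : ℝ :=
  ((S.filter fun j => v j = true).card : ℝ)

/-- The binary values of the profile `u^t` from the EF packing lower bound:
agents 1 and 2 (indices `0, 1`) value item `j` (1-indexed value `(j : ℕ) + 1`) iff
`⌊(j−1)/(2c+1)⌋ = t−1`; agents 3,…,n value item `j` iff `j ≥ m − (c+1)(n−2)`. -/
def uEF (n m c t : ℕ) : Fin n → Fin m → Bool := fun i j =>
  if (i : ℕ) < 2 then decide ((j : ℕ) / (2 * c + 1) = t - 1)
  else decide (m - (c + 1) * (n - 2) ≤ (j : ℕ) + 1)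

/-! ### Auxiliary lemmas -/

lemma EF_nat {n m : ℕ} (c : ℕ) (v : Fin n → Fin m → Bool) (A : Fin n → Finset (Fin m))
    (hef : EF c (fun i => binUtil (v i)) A) (i i' : Fin n) :
    ((A i').filter (fun j => v i j = true)).card ≤ ((A i).filter (fun j => v i j = true)).card + c := by
  classical
  obtain ⟨S, hS, hSc, hge⟩ := hef i i'
  have h1 : (((A i' \ S).filter (fun j => v i j = true)).card : ℝ)
      ≤ (((A i).filter (fun j => v i j = true)).card : ℝ) := hge
  have h1' : ((A i' \ S).filter (fun j => v i j = true)).card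
      ≤ ((A i).filter (fun j => v i j = true)).card := by exact_mod_cast h1
  have h2 : (A i').filter (fun j => v i j = true)
      ⊆ ((A i' \ S).filter (fun j => v i j = true)) ∪ S := by
    intro j hj
    simp only [Finset.mem_filter, Finset.mem_union, Finset.mem_sdiff] at *
    by_cases hjS : j ∈ S
    · exact Or.inr hjS
    · exact Or.inl ⟨⟨hj.1, hjS⟩, hj.2⟩
  have h3 := Finset.card_le_card h2
  have h4 := Finset.card_union_le ((A i' \ S).filter (fun j => v i j = true)) S
  omega

lemma sum_card_filter {n m : ℕ} {A : Fin n → Finset (Fin m)} (hA : IsPartition A)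
    (P : Fin m → Prop) [DecidablePred P] :
    ∑ i, ((A i).filter P).card = (Finset.univ.filter P).card := by
  classical
  obtain ⟨hdis, hcov⟩ := hA
  rw [← hcov, Finset.filter_biUnion, Finset.card_biUnion]
  intro i _ j _ hij
  exact (hdis i j hij).mono (Finset.filter_subset _ _) (Finset.filter_subset _ _)

lemma card_filter_Ico (m lo hi : ℕ) (hhi : hi ≤ m) :
    (Finset.univ.filter (fun j : Fin m => lo ≤ (j:ℕ) ∧ (j:ℕ) < hi)).card = hi - lo := by
  classical
  have hmem : ∀ a ∈ Finset.Ico lo hi, a < m := by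
    intro a ha; rw [Finset.mem_Ico] at ha; omega
  have : Finset.univ.filter (fun j : Fin m => lo ≤ (j:ℕ) ∧ (j:ℕ) < hi)
      = (Finset.Ico lo hi).attachFin hmem := by
    ext j
    simp [Finset.mem_attachFin, Finset.mem_Ico]
  rw [this, Finset.card_attachFin, Nat.card_Ico]

lemma block_iff (c s x : ℕ) : x/(2*c+1) = s ↔ ((2*c+1)*s ≤ x ∧ x < (2*c+1)*(s+1)) := by
  constructor
  · intro h
    have h1 := Nat.div_add_mod x (2*c+1)
    have h2 : x % (2*c+1) < 2*c+1 := Nat.mod_lt _ (by omega)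
    rw [h, Nat.mul_add, Nat.mul_one] at *
    generalize (2*c+1)*s = a at *
    omega
  · rintro ⟨h1, h2⟩
    exact Nat.div_eq_of_lt_le (by rwa [Nat.mul_comm]) (by rwa [Nat.mul_comm])

lemma sum_insert_le' {n : ℕ} (f : Fin n → ℕ) (a : Fin n) (s : Finset (Fin n)) :
    ∑ i ∈ insert a s, f i ≤ f a + ∑ i ∈ s, f i := by
  by_cases h : a ∈ s
  · rw [Finset.insert_eq_self.mpr h]; exact Nat.le_add_left _ _
  · rw [Finset.sum_insert h]

/-- Main structural lemma: in an EFc allocation for profile `u^t`, each of the two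
block agents (`p`, `q`, the agents with index < 2) must own an item of block `B_t`. -/
lemma blockHit {n m c t T : ℕ} (hn : 3 ≤ n) (hc : 1 ≤ c) (ht1 : 1 ≤ t) (htT : t ≤ T)
    (hmT : 2 * ((2*c+1)*T) ≤ m) (hmK : 2 * ((c+1)*(n-2)) < m)
    (A : Fin n → Finset (Fin m)) (hA : IsPartition A) (hconn : ConnAlloc A)
    (p q : Fin n) (hp : (p:ℕ) < 2) (hq : (q:ℕ) < 2) (hpq : p ≠ q)
    (hef : EF c (fun i => binUtil (uEF n m c t i)) A) :
    ∃ j ∈ A p, (j:ℕ) / (2*c+1) = t - 1 := by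
  classical
  obtain ⟨s, rfl⟩ : ∃ s, t = s + 1 := ⟨t - 1, by omega⟩
  have hts : s + 1 - 1 = s := by omega
  -- block and tail predicates
  set Pb : Fin m → Prop := fun j => (j:ℕ)/(2*c+1) = s with hPbdef
  set Pt : Fin m → Prop := fun j => m - (c+1)*(n-2) ≤ (j:ℕ)+1 with hPtdef
  have hfb : ∀ i : Fin n, (i:ℕ) < 2 → ∀ S : Finset (Fin m),
      S.filter (fun j => uEF n m c (s+1) i j = true) = S.filter Pb := by
    intro i hi S
    apply Finset.filter_congr
    intro j _
    simp [uEF, hi, hPbdef]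
  have hft : ∀ i : Fin n, ¬ (i:ℕ) < 2 → ∀ S : Finset (Fin m),
      S.filter (fun j => uEF n m c (s+1) i j = true) = S.filter Pt := by
    intro i hi S
    apply Finset.filter_congr
    intro j _
    simp [uEF, hi, hPtdef]
  set x : Fin n → ℕ := fun i => ((A i).filter Pb).card with hxdef
  set h : Fin n → ℕ := fun i => ((A i).filter Pt).card with hhdef
  have hxp : ∀ i', x i' ≤ x p + c := by
    intro i'
    have := EF_nat c _ A hef p i'
    rwa [hfb p hp, hfb p hp] at this
  have hxq : ∀ i', x i' ≤ x q + c := by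
    intro i'
    have := EF_nat c _ A hef q i'
    rwa [hfb q hq, hfb q hq] at this
  have hht : ∀ i : Fin n, ¬ (i:ℕ) < 2 → ∀ i', h i' ≤ h i + c := by
    intro i hi i'
    have := EF_nat c _ A hef i i'
    rwa [hft i hi, hft i hi] at this
  -- numeric abbreviations
  have hclass : ∀ i : Fin n, (i:ℕ) < 2 → i = p ∨ i = q := by
    intro i hi
    have hne : (p:ℕ) ≠ (q:ℕ) := fun hcon => hpq (Fin.ext hcon)
    by_contra hcon
    push_neg at hcon
    have h1 : (i:ℕ) ≠ (p:ℕ) := fun hcon2 => hcon.1 (Fin.ext hcon2)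
    have h2 : (i:ℕ) ≠ (q:ℕ) := fun hcon2 => hcon.2 (Fin.ext hcon2)
    omega
  have hBX : (2*c+1)*(s+1) ≤ (2*c+1)*T := Nat.mul_le_mul_left _ htT
  have hK1 : 1 ≤ (c+1)*(n-2) := Nat.mul_pos (by omega) (by omega)
  have hKc : (c+1)*(n-2) = c*(n-2) + (n-2) := by ring
  obtain ⟨K, hK⟩ : ∃ K, (c+1)*(n-2) = K := ⟨_, rfl⟩
  obtain ⟨B, hB⟩ : ∃ B, (2*c+1)*(s+1) = B := ⟨_, rfl⟩
  rw [hK] at hK1 hmK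
  rw [hB] at hBX
  have hm1 : B + K + 1 ≤ m := by omega
  -- cardinalities
  have hBcard : (Finset.univ.filter Pb).card = 2*c+1 := by
    have heq : Finset.univ.filter Pb
        = Finset.univ.filter (fun j : Fin m => (2*c+1)*s ≤ (j:ℕ) ∧ (j:ℕ) < (2*c+1)*(s+1)) := by
      apply Finset.filter_congr
      intro j _
      exact block_iff c s (j:ℕ)
    rw [heq, card_filter_Ico _ _ _ (by rw [hB]; omega)]
    have : (2*c+1)*(s+1) = (2*c+1)*s + (2*c+1) := by ring
    omega
  have hHcard : (Finset.univ.filter Pt).card = K + 1 := by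
    have heq : Finset.univ.filter Pt
        = Finset.univ.filter (fun j : Fin m => m - K - 1 ≤ (j:ℕ) ∧ (j:ℕ) < m) := by
      apply Finset.filter_congr
      intro j _
      have := j.isLt
      rw [hPtdef]
      simp only [hK]
      omega
    rw [heq, card_filter_Ico _ _ _ (le_refl m)]
    omega
  have sumb : ∑ i, x i = 2*c+1 := by rw [hxdef, sum_card_filter hA Pb, hBcard]
  have sumh : ∑ i, h i = K + 1 := by rw [hhdef, sum_card_filter hA Pt, hHcard]
  -- spanning item
  have hpfin : m - K - 1 < m := by omega
  set pfin : Fin m := ⟨m - K - 1, hpfin⟩ with hpfdef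
  have hspan : ∀ i : Fin n, ((A i).filter Pb).Nonempty → ((A i).filter Pt).Nonempty →
      pfin ∈ A i := by
    intro i ⟨jb, hjb⟩ ⟨jh, hjh⟩
    rw [Finset.mem_filter] at hjb hjh
    have h1 : (jb:ℕ) < B := by
      have := (block_iff c s (jb:ℕ)).mp hjb.2
      omega
    have h2 : m - K ≤ (jh:ℕ) + 1 := by
      have := hjh.2; rw [hPtdef] at this; simpa [hK] using this
    refine hconn i jb pfin jh hjb.1 hjh.1 ?_ ?_
    · rw [Fin.le_def]; simp [hpfdef]; omega
    · rw [Fin.le_def]; simp [hpfdef]; omega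
  have huniq : ∀ i i' : Fin n, pfin ∈ A i → pfin ∈ A i' → i = i' := by
    intro i i' hi hi'
    by_contra hcon
    exact (Finset.disjoint_left.mp (hA.1 i i' hcon) hi) hi'
  -- nonemptiness helpers
  have hxne : ∀ i : Fin n, x i ≠ 0 → ((A i).filter Pb).Nonempty := by
    intro i hi; exact Finset.card_pos.mp (Nat.pos_of_ne_zero hi)
  have hhne : ∀ i : Fin n, h i ≠ 0 → ((A i).filter Pt).Nonempty := by
    intro i hi; exact Finset.card_pos.mp (Nat.pos_of_ne_zero hi)
  -- sum bound helper
  have pairbound : ∀ w1 w2 : Fin n,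
      (∀ i : Fin n, i ≠ p → i ≠ w1 → i ≠ w2 → x i = 0) →
      2*c+1 ≤ x p + x w1 + x w2 := by
    intro w1 w2 hzero
    have h1 : ∑ i ∈ insert p (insert w1 {w2}), x i = ∑ i, x i := by
      apply Finset.sum_subset (Finset.subset_univ _)
      intro i _ hi
      simp only [Finset.mem_insert, Finset.mem_singleton] at hi
      push_neg at hi
      exact hzero i hi.1 hi.2.1 hi.2.2
    have h2 : ∑ i ∈ insert p (insert w1 {w2}), x i ≤ x p + (x w1 + x w2) := by
      calc ∑ i ∈ insert p (insert w1 {w2}), x i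
          ≤ x p + ∑ i ∈ insert w1 {w2}, x i := sum_insert_le' _ _ _
        _ ≤ x p + (x w1 + ∑ i ∈ ({w2} : Finset (Fin n)), x i) :=
            Nat.add_le_add_left (sum_insert_le' _ _ _) _
        _ = x p + (x w1 + x w2) := by rw [Finset.sum_singleton]
    omega
  -- main case analysis
  have key : ∃ w1 w2 : Fin n, 2*c+1 ≤ x p + x w1 + x w2
      ∧ x w1 ≤ x p + c ∧ x w2 ≤ x p + c := by
    by_cases h0 : ∃ i : Fin n, ¬ ((i:ℕ) < 2) ∧ h i = 0
    · obtain ⟨j0, hj0ge, hj0⟩ := h0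
      have htle : ∀ i', h i' ≤ c := by
        intro i'; have := hht j0 hj0ge i'; omega
      -- the set of agents with tail items is everything except j0
      have hDsub : Finset.univ.filter (fun i => h i ≠ 0) ⊆ Finset.univ.erase j0 := by
        intro i hi
        simp only [Finset.mem_filter, Finset.mem_erase, Finset.mem_univ, and_true, true_and] at *
        intro hcon; subst hcon; exact hi hj0
      have hDcard : n - 1 ≤ (Finset.univ.filter (fun i => h i ≠ 0)).card := by
        by_contra hcon
        push_neg at hcon
        have h1 : ∑ i ∈ Finset.univ.filter (fun i => h i ≠ 0), h i = K + 1 := by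
          rw [Finset.sum_filter_ne_zero]; exact sumh
        have h2 : ∑ i ∈ Finset.univ.filter (fun i => h i ≠ 0), h i
            ≤ (Finset.univ.filter (fun i => h i ≠ 0)).card * c := by
          have := Finset.sum_le_card_nsmul (Finset.univ.filter (fun i => h i ≠ 0)) h c
            (fun i _ => htle i)
          simpa using this
        have h3 : (Finset.univ.filter (fun i => h i ≠ 0)).card * c ≤ (n-2) * c :=
          Nat.mul_le_mul_right _ (by omega)
        have h4 : (n-2)*c = c*(n-2) := Nat.mul_comm _ _
        have h5 : K = c*(n-2) + (n-2) := by omega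
        generalize c*(n-2) = a at *
        omega
      have hD : Finset.univ.filter (fun i => h i ≠ 0) = Finset.univ.erase j0 := by
        apply Finset.eq_of_subset_of_card_le hDsub
        rw [Finset.card_erase_of_mem (Finset.mem_univ _), Finset.card_univ, Fintype.card_fin]
        omega
      have htail_ne : ∀ i : Fin n, i ≠ j0 → ((A i).filter Pt).Nonempty := by
        intro i hij
        have : i ∈ Finset.univ.filter (fun i => h i ≠ 0) := by
          rw [hD]; simp [hij]
        rw [Finset.mem_filter] at this
        exact hhne i this.2
      by_cases hsp : ∃ i : Fin n, i ≠ j0 ∧ x i ≠ 0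
      · obtain ⟨i1, hi1j, hi1x⟩ := hsp
        have hpf1 : pfin ∈ A i1 := hspan i1 (hxne i1 hi1x) (htail_ne i1 hi1j)
        refine ⟨j0, i1, ?_, hxp j0, hxp i1⟩
        rw [← sumb]
        have : 2*c+1 ≤ x p + x j0 + x i1 := by
          apply le_trans _ (pairbound j0 i1 ?_)
          · omega
          · intro i hip hij0 hii1
            by_contra hxi
            exact hii1 (huniq i i1 (hspan i (hxne i hxi) (htail_ne i hij0)) hpf1)
        omega
      · push_neg at hsp
        refine ⟨j0, j0, ?_, hxp j0, hxp j0⟩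
        exact pairbound j0 j0 (fun i _ hij0 _ => hsp i hij0)
    · push_neg at h0
      have htail_ne : ∀ i : Fin n, ¬ ((i:ℕ) < 2) → ((A i).filter Pt).Nonempty := by
        intro i hi; exact hhne i (h0 i (by omega))
      by_cases hsp : ∃ i : Fin n, ¬ ((i:ℕ) < 2) ∧ x i ≠ 0
      · obtain ⟨i1, hi1ge, hi1x⟩ := hsp
        have hpf1 : pfin ∈ A i1 := hspan i1 (hxne i1 hi1x) (htail_ne i1 hi1ge)
        refine ⟨q, i1, ?_, hxp q, hxp i1⟩
        apply pairbound q i1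
        intro i hip hiq hii1
        by_cases hilt : (i:ℕ) < 2
        · rcases hclass i hilt with rfl | rfl
          · exact absurd rfl hip
          · exact absurd rfl hiq
        · by_contra hxi
          exact hii1 (huniq i i1 (hspan i (hxne i hxi) (htail_ne i hilt)) hpf1)
      · push_neg at hsp
        refine ⟨q, q, ?_, hxp q, hxp q⟩
        apply pairbound q q
        intro i hip hiq _
        by_cases hilt : (i:ℕ) < 2
        · rcases hclass i hilt with rfl | rfl
          · exact absurd rfl hip
          · exact absurd rfl hiq
        · exact hsp i (by omega)
  obtain ⟨w1, w2, hw, hw1, hw2⟩ := key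
  have hxp1 : 1 ≤ x p := by omega
  obtain ⟨j, hj⟩ := Finset.card_pos.mp hxp1
  rw [Finset.mem_filter] at hj
  exact ⟨j, hj.1, by rw [hts]; exact hj.2⟩

theorem EF_packing_disjoint (n m c T : ℕ) (hn : 3 ≤ n) (hc : 1 ≤ c) (hT : 1 ≤ T)
    (h1 : (((2 * c + 1) * T : ℕ) : ℝ) ≤ (m : ℝ) / 2)
    (h2 : (((c + 1) * (n - 2) : ℕ) : ℝ) < (m : ℝ) / 2) :
    ∀ t t' : ℕ, 1 ≤ t → t ≤ T → 1 ≤ t' → t' ≤ T → t ≠ t' →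
      ∀ A : Fin n → Finset (Fin m), IsPartition A → ConnAlloc A →
        ¬ (EF c (fun i => binUtil (uEF n m c t i)) A ∧
            EF c (fun i => binUtil (uEF n m c t' i)) A) := by
  have hmT : 2 * ((2*c+1)*T) ≤ m := by
    have h1' : ((2 * ((2*c+1)*T) : ℕ) : ℝ) ≤ (m : ℝ) := by push_cast at h1 ⊢; linarith
    exact_mod_cast h1'
  have hmK : 2 * ((c+1)*(n-2)) < m := by
    have h2' : ((2 * ((c+1)*(n-2)) : ℕ) : ℝ) < (m : ℝ) := by push_cast at h2 ⊢; linarith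
    exact_mod_cast h2'
  have hn0 : (0:ℕ) < n := by omega
  have hn1 : (1:ℕ) < n := by omega
  suffices H : ∀ t t' : ℕ, 1 ≤ t → t ≤ T → 1 ≤ t' → t' ≤ T → t < t' →
      ∀ A : Fin n → Finset (Fin m), IsPartition A → ConnAlloc A →
        EF c (fun i => binUtil (uEF n m c t i)) A →
        EF c (fun i => binUtil (uEF n m c t' i)) A → False by
    intro t t' ht1 htT ht'1 ht'T hne A hP hC hEF
    obtain ⟨e1, e2⟩ := hEF
    rcases Nat.lt_or_ge t t' with hlt | hge
    · exact H t t' ht1 htT ht'1 ht'T hlt A hP hC e1 e2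
    · exact H t' t ht'1 ht'T ht1 htT (by omega) A hP hC e2 e1
  intro t t' ht1 htT ht'1 ht'T hlt A hP hC e1 e2
  set p0 : Fin n := ⟨0, hn0⟩ with hp0
  set p1 : Fin n := ⟨1, hn1⟩ with hp1
  have hne01 : p0 ≠ p1 := by
    simp [hp0, hp1, Fin.ext_iff]
  obtain ⟨x0, hx0A, hx0⟩ := blockHit hn hc ht1 htT hmT hmK A hP hC p0 p1 (by simp [hp0])
    (by simp [hp1]) hne01 e1
  obtain ⟨x1, hx1A, hx1⟩ := blockHit hn hc ht1 htT hmT hmK A hP hC p1 p0 (by simp [hp1])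
    (by simp [hp0]) hne01.symm e1
  obtain ⟨y0, hy0A, hy0⟩ := blockHit hn hc ht'1 ht'T hmT hmK A hP hC p0 p1 (by simp [hp0])
    (by simp [hp1]) hne01 e2
  obtain ⟨y1, hy1A, hy1⟩ := blockHit hn hc ht'1 ht'T hmT hmK A hP hC p1 p0 (by simp [hp1])
    (by simp [hp0]) hne01.symm e2
  -- the boundary item z = (2c+1)·t − 1
  obtain ⟨B, hB⟩ : ∃ B, (2*c+1)*t = B := ⟨_, rfl⟩
  obtain ⟨B', hB'⟩ : ∃ B', (2*c+1)*(t'-1) = B' := ⟨_, rfl⟩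
  have hBB' : B ≤ B' := by rw [← hB, ← hB']; exact Nat.mul_le_mul_left _ (by omega)
  have hB1 : 1 ≤ B := by rw [← hB]; exact Nat.mul_pos (by omega) (by omega)
  have hBm : B ≤ m := by
    have hBT : B ≤ (2*c+1)*T := by rw [← hB]; exact Nat.mul_le_mul_left _ htT
    omega
  have hzlt : B - 1 < m := by omega
  set z : Fin m := ⟨B - 1, hzlt⟩ with hz
  -- x0 < B
  have hx0b : (x0:ℕ) < B := by
    rw [← hB]
    have h' := (block_iff c (t-1) (x0:ℕ)).mp (by rwa [] at hx0)
    have : t - 1 + 1 = t := by omega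
    rw [this] at h'
    exact h'.2
  have hx1b : (x1:ℕ) < B := by
    rw [← hB]
    have h' := (block_iff c (t-1) (x1:ℕ)).mp hx1
    have : t - 1 + 1 = t := by omega
    rw [this] at h'
    exact h'.2
  have hy0b : B' ≤ (y0:ℕ) := by
    rw [← hB']
    exact ((block_iff c (t'-1) (y0:ℕ)).mp hy0).1
  have hy1b : B' ≤ (y1:ℕ) := by
    rw [← hB']
    exact ((block_iff c (t'-1) (y1:ℕ)).mp hy1).1
  have hz0 : z ∈ A p0 := by
    refine hC p0 x0 z y0 hx0A hy0A ?_ ?_ <;> rw [Fin.le_def] <;> simp [hz] <;> omega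
  have hz1 : z ∈ A p1 := by
    refine hC p1 x1 z y1 hx1A hy1A ?_ ?_ <;> rw [Fin.le_def] <;> simp [hz] <;> omega
  exact (Finset.disjoint_left.mp (hP.1 p0 p1 hne01) hz0) hz1
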